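/- arXiv:2109.05414 — 2 statements merged into one kernel-verified Lean document; each statement's English description precedes it below -/
import Mathlib

section
/- Let σ = (σ_{i\bar{j}}) be a positive definite diagonal Hermitian n×n matrix and let T_{kq\bar{i}} (for indices 1 ≤ k, q, i ≤ n) be complex numbers symmetric in k and q. Then Σ_{i,k,q} σ^{k\bar{k}}σ^{q\bar{q}}(σ^{i\bar{i}})² |T_{kq\bar{i}}|² ≥ (1/Σ_j σ^{j\bar{j}}) · Σ_k σ^{k\bar{k}} |Σ_i (σ^{i\bar{i}})² T_{ki\bar{i}}|², where σ^{i\bar{i}} = 1/σ_{i\bar{i}}. -/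
theorem cs_aux {n : ℕ} (lam : Fin n → ℝ) (hl : ∀ i, 0 < lam i) (z : Fin n → ℂ) :
    Complex.normSq (∑ i, ((lam i : ℂ)) ^ 2 * z i) ≤
      (∑ j, lam j) * ∑ i, lam i ^ 3 * Complex.normSq (z i) := by
  have h1 : ‖(∑ i, ((lam i : ℂ)) ^ 2 * z i)‖ ≤
      ∑ i, lam i ^ 2 * ‖(z i)‖ := by
    refine le_trans (norm_sum_le _ _) ?_
    apply Finset.sum_le_sum
    intro i _
    rw [norm_mul, norm_pow, Complex.norm_real, Real.norm_eq_abs, abs_of_pos (hl i)]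
  have h2 : (∑ i, lam i ^ 2 * ‖(z i)‖) ^ 2 ≤
      (∑ j, lam j) * ∑ i, lam i ^ 3 * Complex.normSq (z i) := by
    refine Finset.sum_sq_le_sum_mul_sum_of_sq_eq_mul Finset.univ
      (fun i _ => (hl i).le)
      (fun i _ => by have := Complex.normSq_nonneg (z i); have := (hl i).le; positivity)
      (fun i _ => ?_)
    rw [← Complex.sq_norm]
    ring
  calc Complex.normSq (∑ i, ((lam i : ℂ)) ^ 2 * z i)
      = ‖(∑ i, ((lam i : ℂ)) ^ 2 * z i)‖ ^ 2 := (Complex.sq_norm _).symm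
    _ ≤ (∑ i, lam i ^ 2 * ‖(z i)‖) ^ 2 := by
        apply pow_le_pow_left₀ (norm_nonneg _) h1
    _ ≤ _ := h2

/-- Cauchy–Schwarz type inequality (Wu–Yau–Zheng) for a diagonal
positive metric `σ` with inverse diagonal entries `lam i = σ^{i ī}` and a tensor
`T` symmetric in its first two indices:
`Σ_{i,k,q} σ^{k k̄} σ^{q q̄} (σ^{i ī})² |T_{k q ī}|²
  ≥ (1/Σ_j σ^{j j̄}) Σ_k σ^{k k̄} |Σ_i (σ^{i ī})² T_{k i ī}|²`. -/
theorem stmt_3 {n : ℕ} (σ : Fin n → ℝ) (hσ : ∀ i, 0 < σ i)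
    (lam : Fin n → ℝ) (hlam : ∀ i, lam i = (σ i)⁻¹)
    (T : Fin n → Fin n → Fin n → ℂ)
    (hTsym : ∀ k q i, T k q i = T q k i) :
    (∑ i, ∑ k, ∑ q, lam k * lam q * (lam i) ^ 2 * Complex.normSq (T k q i)) ≥
      (∑ j, lam j)⁻¹ *
        ∑ k, lam k * Complex.normSq (∑ i, ((lam i : ℂ)) ^ 2 * T k i i) := by
  have hl : ∀ i, 0 < lam i := fun i => by rw [hlam]; exact inv_pos.mpr (hσ i)
  rcases Nat.eq_zero_or_pos n with hn | hn
  · subst hn; simp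
  have hS : 0 < ∑ j, lam j :=
    Finset.sum_pos (fun i _ => hl i) (Finset.univ_nonempty_iff.mpr ⟨⟨0, hn⟩⟩)
  -- middle quantity
  have step1 : (∑ j, lam j)⁻¹ *
        (∑ k, lam k * Complex.normSq (∑ i, ((lam i : ℂ)) ^ 2 * T k i i)) ≤
      ∑ k, ∑ i, lam k * (lam i ^ 3 * Complex.normSq (T k i i)) := by
    rw [inv_mul_le_iff₀ hS]
    calc ∑ k, lam k * Complex.normSq (∑ i, ((lam i : ℂ)) ^ 2 * T k i i)
        ≤ ∑ k, lam k * ((∑ j, lam j) * ∑ i, lam i ^ 3 * Complex.normSq (T k i i)) := by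
          apply Finset.sum_le_sum
          intro k _
          exact mul_le_mul_of_nonneg_left (cs_aux lam hl (fun i => T k i i)) (hl k).le
      _ = (∑ j, lam j) * ∑ k, ∑ i, lam k * (lam i ^ 3 * Complex.normSq (T k i i)) := by
          rw [Finset.mul_sum]
          refine Finset.sum_congr rfl fun k _ => ?_
          simp_rw [Finset.mul_sum]
          exact Finset.sum_congr rfl fun i _ => by ring
  refine le_trans step1 ?_
  rw [Finset.sum_comm]
  apply Finset.sum_le_sum
  intro i _
  calc ∑ k, lam k * (lam i ^ 3 * Complex.normSq (T k i i))
      = ∑ k, lam k * lam i * lam i ^ 2 * Complex.normSq (T k i i) := by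
        apply Finset.sum_congr rfl; intro k _; ring
    _ ≤ ∑ k, ∑ q, lam k * lam q * lam i ^ 2 * Complex.normSq (T k q i) := by
        apply Finset.sum_le_sum
        intro k _
        apply Finset.single_le_sum (f := fun q => lam k * lam q * lam i ^ 2 * Complex.normSq (T k q i))
          (fun q _ => mul_nonneg (mul_nonneg (mul_nonneg (hl k).le (hl q).le) (sq_nonneg _)) (Complex.normSq_nonneg _)) (Finset.mem_univ i)
end

section
/- Let R = (R_{i\bar{j}k\bar{l}}) be a tensor on ℂⁿ with Kähler symmetries with respect to a positive definite Hermitian metric h, and suppose the holomorphic sectional curvature satisfies R(v, \bar{v}, v, \bar{v}) ≤ −κ |v|⁴_h for all v ∈ ℂⁿ and some κ > 0. Let σ be another positive definite Hermitian metric. Then Σ σ^{i\bar{j}}σ^{k\bar{l}}R_{i\bar{j}k\bar{l}} ≤ −((n+1)/(2n)) κ (Σ σ^{i\bar{j}}h_{i\bar{j}})². -/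
open ComplexOrder

section RoydenAux

open Finset Matrix

local notation "conj'" => starRingEnd ℂ

variable {M : Type*} [AddCommMonoid M]
variable {ι₁ ι₂ ι₃ ι₄ ι₅ : Type*} [Fintype ι₁] [Fintype ι₂] [Fintype ι₃] [Fintype ι₄] [Fintype ι₅]

lemma sc2 (f : ι₁ → ι₂ → ι₃ → M) :
    ∑ x, ∑ a, ∑ b, f x a b = ∑ a, ∑ b, ∑ x, f x a b := by
  rw [Finset.sum_comm]
  refine Finset.sum_congr rfl fun a _ => ?_
  rw [Finset.sum_comm]

lemma sc3 (f : ι₁ → ι₂ → ι₃ → ι₄ → M) :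
    ∑ x, ∑ a, ∑ b, ∑ c, f x a b c = ∑ a, ∑ b, ∑ c, ∑ x, f x a b c := by
  rw [Finset.sum_comm]
  refine Finset.sum_congr rfl fun a _ => ?_
  rw [Finset.sum_comm]
  refine Finset.sum_congr rfl fun b _ => ?_
  rw [Finset.sum_comm]

lemma sc4 (f : ι₁ → ι₂ → ι₃ → ι₄ → ι₅ → M) :
    ∑ x, ∑ a, ∑ b, ∑ c, ∑ d, f x a b c d = ∑ a, ∑ b, ∑ c, ∑ d, ∑ x, f x a b c d := by
  rw [Finset.sum_comm]
  refine Finset.sum_congr rfl fun a _ => ?_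
  rw [Finset.sum_comm]
  refine Finset.sum_congr rfl fun b _ => ?_
  rw [Finset.sum_comm]
  refine Finset.sum_congr rfl fun c _ => ?_
  rw [Finset.sum_comm]

lemma sum8_comm {ι κ : Type*} [Fintype ι] [Fintype κ]
    (f : ι → ι → ι → ι → κ → κ → κ → κ → M) :
    ∑ i, ∑ j, ∑ k, ∑ l, ∑ a, ∑ b, ∑ c, ∑ d, f i j k l a b c d
      = ∑ a, ∑ b, ∑ c, ∑ d, ∑ i, ∑ j, ∑ k, ∑ l, f i j k l a b c d := by
  calc ∑ i, ∑ j, ∑ k, ∑ l, ∑ a, ∑ b, ∑ c, ∑ d, f i j k l a b c d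
      = ∑ i, ∑ j, ∑ k, ∑ a, ∑ b, ∑ c, ∑ d, ∑ l, f i j k l a b c d := by
        exact Finset.sum_congr rfl fun i _ => Finset.sum_congr rfl fun j _ =>
          Finset.sum_congr rfl fun k _ => sc4 _
    _ = ∑ i, ∑ j, ∑ a, ∑ b, ∑ c, ∑ d, ∑ k, ∑ l, f i j k l a b c d := by
        exact Finset.sum_congr rfl fun i _ => Finset.sum_congr rfl fun j _ => sc4 _
    _ = ∑ i, ∑ a, ∑ b, ∑ c, ∑ d, ∑ j, ∑ k, ∑ l, f i j k l a b c d := by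
        exact Finset.sum_congr rfl fun i _ => sc4 _
    _ = ∑ a, ∑ b, ∑ c, ∑ d, ∑ i, ∑ j, ∑ k, ∑ l, f i j k l a b c d := sc4 _

lemma sum6_comm {ι κ : Type*} [Fintype ι] [Fintype κ]
    (f : ι → ι → ι → ι → κ → κ → M) :
    ∑ i, ∑ j, ∑ k, ∑ l, ∑ a, ∑ b, f i j k l a b
      = ∑ a, ∑ b, ∑ i, ∑ j, ∑ k, ∑ l, f i j k l a b := by
  calc ∑ i, ∑ j, ∑ k, ∑ l, ∑ a, ∑ b, f i j k l a b
      = ∑ i, ∑ j, ∑ k, ∑ a, ∑ b, ∑ l, f i j k l a b := by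
        exact Finset.sum_congr rfl fun i _ => Finset.sum_congr rfl fun j _ =>
          Finset.sum_congr rfl fun k _ => sc2 _
    _ = ∑ i, ∑ j, ∑ a, ∑ b, ∑ k, ∑ l, f i j k l a b := by
        exact Finset.sum_congr rfl fun i _ => Finset.sum_congr rfl fun j _ => sc2 _
    _ = ∑ i, ∑ a, ∑ b, ∑ j, ∑ k, ∑ l, f i j k l a b := by
        exact Finset.sum_congr rfl fun i _ => sc2 _
    _ = ∑ a, ∑ b, ∑ i, ∑ j, ∑ k, ∑ l, f i j k l a b := sc2 _

lemma sum4het_comm {ι κ : Type*} [Fintype ι] [Fintype κ]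
    (f : ι → ι → κ → κ → M) :
    ∑ i, ∑ j, ∑ a, ∑ b, f i j a b = ∑ a, ∑ b, ∑ i, ∑ j, f i j a b := by
  calc ∑ i, ∑ j, ∑ a, ∑ b, f i j a b
      = ∑ i, ∑ a, ∑ b, ∑ j, f i j a b := by
        exact Finset.sum_congr rfl fun i _ => sc2 _
    _ = ∑ a, ∑ b, ∑ i, ∑ j, f i j a b := sc2 _

lemma sum_comm3' (g : ι₁ → ι₂ → ι₃ → ι₄ → M) :
    ∑ x, ∑ a, ∑ b, ∑ c, g x a b c = ∑ a, ∑ b, ∑ c, ∑ x, g x a b c := sc3 g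

lemma sum4_rev {ι : Type*} [Fintype ι] (f : ι → ι → ι → ι → M) :
    ∑ d, ∑ g, ∑ b, ∑ a, f a b g d = ∑ a, ∑ b, ∑ g, ∑ d, f a b g d := by
  rw [← sc3 (fun x y z w => f x w z y)]
  refine Finset.sum_congr rfl fun a _ => ?_
  rw [← sc2 (fun x y z => f a x z y)]
  refine Finset.sum_congr rfl fun b _ => ?_
  rw [Finset.sum_comm]

lemma sum_swap13 {ι : Type*} [Fintype ι] (f : ι → ι → ι → ι → M) :
    ∑ i, ∑ j, ∑ k, ∑ l, f i j k l = ∑ i, ∑ j, ∑ k, ∑ l, f k j i l := by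
  calc ∑ i, ∑ j, ∑ k, ∑ l, f i j k l
      = ∑ i, ∑ k, ∑ j, ∑ l, f i j k l := by
        exact Finset.sum_congr rfl fun i _ => Finset.sum_comm
    _ = ∑ k, ∑ i, ∑ j, ∑ l, f i j k l := Finset.sum_comm
    _ = ∑ k, ∑ j, ∑ i, ∑ l, f i j k l := by
        exact Finset.sum_congr rfl fun k _ => Finset.sum_comm

variable {n : ℕ}

noncomputable def phase (x : Fin 4) : ℂ := Complex.I ^ (x : ℕ)

lemma phase0 : phase 0 = 1 := by rw [phase, show ((0:Fin 4):ℕ) = 0 from rfl, pow_zero]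
lemma phase1 : phase 1 = Complex.I := by rw [phase, show ((1:Fin 4):ℕ) = 1 from rfl, pow_one]
lemma phase2 : phase 2 = -1 := by
  rw [phase, show ((2:Fin 4):ℕ) = 2 from rfl, sq, Complex.I_mul_I]
lemma phase3 : phase 3 = -Complex.I := by
  rw [phase, show ((3:Fin 4):ℕ) = 3 from rfl, pow_succ, sq, Complex.I_mul_I]; ring

lemma phase_mul_conj (x : Fin 4) : phase x * conj' (phase x) = 1 := by
  rw [Complex.mul_conj]
  fin_cases x <;> simp [phase0, phase1, phase2, phase3, Complex.sq_norm]

noncomputable def F4 (R : Fin n → Fin n → Fin n → Fin n → ℂ) (E : Matrix (Fin n) (Fin n) ℂ)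
    (a b c d : Fin n) : ℂ :=
  ∑ i, ∑ j, ∑ k, ∑ l, R i j k l * E a i * conj' (E b j) * E c k * conj' (E d l)

lemma expand_quartic (R : Fin n → Fin n → Fin n → Fin n → ℂ)
    (E : Matrix (Fin n) (Fin n) ℂ) (c : Fin n → ℂ) :
    (∑ i, ∑ j, ∑ k, ∑ l, R i j k l * (∑ a, c a * E a i) * conj' (∑ b, c b * E b j)
        * (∑ g, c g * E g k) * conj' (∑ d, c d * E d l))
      = ∑ a, ∑ b, ∑ g, ∑ d, c a * conj' (c b) * c g * conj' (c d) * F4 R E a b g d := by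
  have key : ∀ a b g d : Fin n, c a * conj' (c b) * c g * conj' (c d) * F4 R E a b g d
      = ∑ i, ∑ j, ∑ k, ∑ l, R i j k l * (c a * E a i) * conj' (c b * E b j)
          * (c g * E g k) * conj' (c d * E d l) := by
    intro a b g d
    unfold F4
    simp only [Finset.mul_sum, _root_.map_mul]
    refine Finset.sum_congr rfl fun i _ => Finset.sum_congr rfl fun j _ =>
      Finset.sum_congr rfl fun k _ => Finset.sum_congr rfl fun l _ => by ring
  simp only [key]
  rw [← sum8_comm (fun i j k l a b g d => R i j k l * (c a * E a i) * conj' (c b * E b j)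
          * (c g * E g k) * conj' (c d * E d l))]
  refine Finset.sum_congr rfl fun i _ => Finset.sum_congr rfl fun j _ =>
    Finset.sum_congr rfl fun k _ => Finset.sum_congr rfl fun l _ => ?_
  simp only [map_sum, _root_.map_mul, Finset.mul_sum, Finset.sum_mul]
  rw [← sum4_rev (fun a b g d => R i j k l * (c a * E a i) * (conj' (c b) * conj' (E b j))
      * (c g * E g k) * (conj' (c d) * conj' (E d l)))]

lemma expand_quadratic (h : Matrix (Fin n) (Fin n) ℂ)
    (E : Matrix (Fin n) (Fin n) ℂ) (c : Fin n → ℂ) :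
    (∑ i, ∑ j, h i j * (∑ a, c a * E a i) * conj' (∑ b, c b * E b j))
      = ∑ a, ∑ b, c a * conj' (c b) *
          (∑ i, ∑ j, h i j * E a i * conj' (E b j)) := by
  have key : ∀ a b : Fin n, c a * conj' (c b) * (∑ i, ∑ j, h i j * E a i * conj' (E b j))
      = ∑ i, ∑ j, h i j * (c a * E a i) * conj' (c b * E b j) := by
    intro a b
    simp only [Finset.mul_sum, _root_.map_mul]
    refine Finset.sum_congr rfl fun i _ => Finset.sum_congr rfl fun j _ => by ring
  simp only [key]
  rw [← sum4het_comm (fun i j a b => h i j * (c a * E a i) * conj' (c b * E b j))]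
  refine Finset.sum_congr rfl fun i _ => Finset.sum_congr rfl fun j _ => ?_
  simp only [map_sum, _root_.map_mul, Finset.mul_sum, Finset.sum_mul]
  rw [← Finset.sum_comm]

def Cond (α β γ δ t : Fin n) : Prop :=
  ((t = α ↔ t = β) ∧ (t = γ ↔ t = δ)) ∨ ((t = α ↔ t = δ) ∧ (t = γ ↔ t = β))

instance condDec (α β γ δ t : Fin n) : Decidable (Cond α β γ δ t) := by
  unfold Cond; infer_instance

lemma cond_all (α β γ δ : Fin n) (hP : (α = β ∧ γ = δ) ∨ (α = δ ∧ β = γ)) (t : Fin n) :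
    Cond α β γ δ t := by
  rcases hP with ⟨h1, h2⟩ | ⟨h1, h2⟩
  · exact Or.inl ⟨by rw [h1], by rw [h2]⟩
  · exact Or.inr ⟨by rw [h1], by rw [h2]⟩

lemma cond_not (α β γ δ : Fin n) (hP : ¬((α = β ∧ γ = δ) ∨ (α = δ ∧ β = γ))) :
    ∃ t, ¬ Cond α β γ δ t := by
  push_neg at hP
  obtain ⟨hP1, hP2⟩ := hP
  by_cases hab : α = β
  · have hgd : γ ≠ δ := hP1 hab
    refine ⟨γ, fun hC => ?_⟩
    rcases hC with ⟨h5, h6⟩ | ⟨h5, h6⟩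
    · exact hgd (h6.mp rfl)
    · exact hgd (h5.mp ((h6.mp rfl).trans hab.symm))
  · by_cases had : α = δ
    · have hbg : β ≠ γ := hP2 had
      refine ⟨β, fun hC => ?_⟩
      rcases hC with ⟨h5, h6⟩ | ⟨h5, h6⟩
      · exact hab (h5.mpr rfl).symm
      · exact hbg (h6.mpr rfl)
    · refine ⟨α, fun hC => ?_⟩
      rcases hC with ⟨h5, h6⟩ | ⟨h5, h6⟩
      · exact hab (h5.mp rfl)
      · exact had (h5.mp rfl)

lemma coord_sum' (p q r s : Prop) [Decidable p] [Decidable q] [Decidable r] [Decidable s] :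
    ∑ x : Fin 4, ((if p then phase x else 1) * (if q then conj' (phase x) else 1) *
        (if r then phase x else 1) * (if s then conj' (phase x) else 1))
      = if ((p ↔ q) ∧ (r ↔ s)) ∨ ((p ↔ s) ∧ (r ↔ q)) then 4 else 0 := by
  by_cases hp : p <;> by_cases hq : q <;> by_cases hr : r <;> by_cases hs : s <;>
    simp [hp, hq, hr, hs, Fin.sum_univ_four, phase0, phase1, phase2, phase3,
      Complex.conj_I] <;> ring

lemma weight (α β γ δ : Fin n) :
    ∑ ε : Fin n → Fin 4,
        phase (ε α) * conj' (phase (ε β)) * phase (ε γ) * conj' (phase (ε δ))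
      = if (α = β ∧ γ = δ) ∨ (α = δ ∧ β = γ) then (4 : ℂ) ^ n else 0 := by
  have step1 : ∀ ε : Fin n → Fin 4,
      phase (ε α) * conj' (phase (ε β)) * phase (ε γ) * conj' (phase (ε δ))
        = ∏ t, ((if t = α then phase (ε t) else 1) * (if t = β then conj' (phase (ε t)) else 1) *
            (if t = γ then phase (ε t) else 1) * (if t = δ then conj' (phase (ε t)) else 1)) := by
    intro ε
    simp only [Finset.prod_mul_distrib]
    rw [Finset.prod_ite_eq' Finset.univ α (fun t => phase (ε t)),
      Finset.prod_ite_eq' Finset.univ β (fun t => conj' (phase (ε t))),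
      Finset.prod_ite_eq' Finset.univ γ (fun t => phase (ε t)),
      Finset.prod_ite_eq' Finset.univ δ (fun t => conj' (phase (ε t)))]
    simp
  simp only [step1]
  have key := Finset.prod_univ_sum (fun _ : Fin n => (Finset.univ : Finset (Fin 4)))
    (fun t x => (if t = α then phase x else 1) * (if t = β then conj' (phase x) else 1) *
      (if t = γ then phase x else 1) * (if t = δ then conj' (phase x) else 1))
  rw [Fintype.piFinset_univ] at key
  rw [← key]
  have step2 : ∀ t : Fin n, (∑ x : Fin 4, ((if t = α then phase x else 1) *
      (if t = β then conj' (phase x) else 1) * (if t = γ then phase x else 1) *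
      (if t = δ then conj' (phase x) else 1))) = if Cond α β γ δ t then 4 else 0 := by
    intro t
    rw [coord_sum']
    rfl
  rw [Finset.prod_congr rfl fun t _ => step2 t]
  by_cases hP : (α = β ∧ γ = δ) ∨ (α = δ ∧ β = γ)
  · rw [if_pos hP, Finset.prod_congr rfl fun t _ => if_pos (cond_all α β γ δ hP t),
      Finset.prod_const, Finset.card_univ, Fintype.card_fin]
  · obtain ⟨t, ht⟩ := cond_not α β γ δ hP
    rw [if_neg hP]
    exact Finset.prod_eq_zero (Finset.mem_univ t) (if_neg ht)

open scoped MatrixOrder in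
lemma exists_E (h σ : Matrix (Fin n) (Fin n) ℂ) (hh : h.IsHermitian) (hσ : σ.PosDef) :
    ∃ E : Matrix (Fin n) (Fin n) ℂ, σ⁻¹ = star E * E ∧
      ∀ a b, a ≠ b → (E * h * star E) a b = 0 := by
  have hσi : (σ⁻¹).PosDef := hσ.inv
  set A := CFC.sqrt (σ⁻¹) with hA
  have hAherm : A.IsHermitian := (CFC.sqrt_nonneg (σ⁻¹)).posSemidef.1
  have hAA : A * A = σ⁻¹ := CFC.sqrt_mul_sqrt_self (σ⁻¹) hσi.posSemidef.nonneg
  have hM : (A * h * A).IsHermitian := by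
    unfold Matrix.IsHermitian
    rw [conjTranspose_mul, conjTranspose_mul, hAherm.eq, hh.eq, mul_assoc]
  set V := (hM.eigenvectorUnitary : Matrix (Fin n) (Fin n) ℂ) with hV
  have hAst : star A = A := by rw [Matrix.star_eq_conjTranspose]; exact hAherm.eq
  have hVV : V * star V = 1 := mem_unitaryGroup_iff.mp hM.eigenvectorUnitary.2
  refine ⟨star V * A, ?_, ?_⟩
  · rw [Matrix.star_mul, star_star, hAst, mul_assoc, ← mul_assoc V, hVV, one_mul, hAA]
  · intro a b hab
    have hdiag := hM.conjStarAlgAut_star_eigenvectorUnitary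
    rw [Unitary.conjStarAlgAut_star_apply] at hdiag
    have hrw : star V * A * h * star (star V * A) = star V * (A * h * A) * V := by
      rw [Matrix.star_mul, star_star, hAst]
      noncomm_ring
    rw [hrw, hdiag]
    exact Matrix.diagonal_apply_ne _ hab

lemma F4_swap (R : Fin n → Fin n → Fin n → Fin n → ℂ)
    (hsym1 : ∀ i j k l, R i j k l = R k j i l)
    (E : Matrix (Fin n) (Fin n) ℂ) (a b : Fin n) :
    F4 R E a b b a = F4 R E b b a a := by
  unfold F4
  have e1 : (∑ i, ∑ j, ∑ k, ∑ l, R i j k l * E a i * conj' (E b j) * E b k * conj' (E a l))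
      = ∑ i, ∑ j, ∑ k, ∑ l, R k j i l * E a i * conj' (E b j) * E b k * conj' (E a l) := by
    refine Finset.sum_congr rfl fun i _ => Finset.sum_congr rfl fun j _ =>
      Finset.sum_congr rfl fun k _ => Finset.sum_congr rfl fun l _ => ?_
    rw [hsym1 i j k l]
  rw [e1]
  rw [← sum_swap13 (fun i j k l => R i j k l * E a k * conj' (E b j) * E b i * conj' (E a l))]
  refine Finset.sum_congr rfl fun i _ => Finset.sum_congr rfl fun j _ =>
    Finset.sum_congr rfl fun k _ => Finset.sum_congr rfl fun l _ => by ring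

lemma ite_or_mul (P1 P2 : Prop) [Decidable P1] [Decidable P2] (c x : ℂ) :
    (if P1 ∨ P2 then c else 0) * x = (if P1 then c else 0) * x + (if P2 then c else 0) * x
      - (if P1 ∧ P2 then c else 0) * x := by
  by_cases h1 : P1 <;> by_cases h2 : P2 <;> simp [h1, h2] <;> ring

lemma sum_ite_const {ι : Type*} [Fintype ι] {p : Prop} [Decidable p] (f : ι → M) :
    ∑ x, (if p then f x else 0) = if p then ∑ x, f x else 0 := by
  split <;> simp

section IteSums
variable {ι : Type*} [Fintype ι] [DecidableEq ι]

lemma ite_sum1 (c : ℂ) (F : ι → ι → ι → ι → ℂ) :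
    ∑ a, ∑ b, ∑ g, ∑ d, (if a = b ∧ g = d then c else 0) * F a b g d
      = c * ∑ a, ∑ g, F a a g g := by
  simp only [ite_mul, zero_mul, ite_and, sum_ite_const, Finset.sum_ite_eq,
    Finset.mem_univ, if_true]
  simp only [← Finset.mul_sum]

lemma ite_sum2 (c : ℂ) (F : ι → ι → ι → ι → ℂ) :
    ∑ a, ∑ b, ∑ g, ∑ d, (if a = d ∧ b = g then c else 0) * F a b g d
      = c * ∑ a, ∑ b, F a b b a := by
  simp only [ite_mul, zero_mul, ite_and, sum_ite_const, Finset.sum_ite_eq,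
    Finset.mem_univ, if_true]
  simp only [← Finset.mul_sum]

lemma ite_sum3 (c : ℂ) (F : ι → ι → ι → ι → ℂ) :
    ∑ a, ∑ b, ∑ g, ∑ d, (if b = a ∧ g = a ∧ d = a then c else 0) * F a b g d
      = c * ∑ a, F a a a a := by
  simp only [ite_mul, zero_mul, ite_and, sum_ite_const, Finset.sum_ite_eq,
    Finset.sum_ite_eq', Finset.mem_univ, if_true]
  simp only [← Finset.mul_sum]

lemma ite_sum_split (c : ℂ) (F : ι → ι → ι → ι → ℂ) :
    ∑ a, ∑ b, ∑ g, ∑ d, (if (a = b ∧ g = d) ∨ (a = d ∧ b = g) then c else 0) * F a b g d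
      = c * (∑ a, ∑ g, F a a g g) + c * (∑ a, ∑ b, F a b b a) - c * ∑ a, F a a a a := by
  have hiff : ∀ a b g d : ι, ((a = b ∧ g = d) ∧ (a = d ∧ b = g)) ↔
      (b = a ∧ g = a ∧ d = a) := by
    intro a b g d
    constructor
    · rintro ⟨⟨h1, h2⟩, ⟨h3, h4⟩⟩
      exact ⟨h1.symm, h2.trans h3.symm, h3.symm⟩
    · rintro ⟨h1, h2, h3⟩
      exact ⟨⟨h1.symm, h2.trans h3.symm⟩, ⟨h3.symm, h1.trans h2.symm⟩⟩
  simp only [ite_or_mul, Finset.sum_add_distrib, Finset.sum_sub_distrib]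
  rw [ite_sum1, ite_sum2]
  simp only [hiff]
  rw [ite_sum3]

end IteSums

end RoydenAux
open ComplexOrder
section Main
local notation "conj'" => starRingEnd ℂ

set_option maxHeartbeats 2000000 in
/-- (Royden's lemma.)  Let `R` be a Kähler-type curvature tensor
on `ℂⁿ` with respect to a positive definite Hermitian metric `h`, whose holomorphic
sectional curvature satisfies `R(v,v̄,v,v̄) ≤ −κ |v|⁴_h` for all `v`.  Then for any
positive definite Hermitian metric `σ`,
`Σ σ^{i j̄} σ^{k l̄} R_{i j̄ k l̄} ≤ −((n+1)/(2n)) κ (Σ σ^{i j̄} h_{i j̄})²`. -/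
theorem stmt_12 {n : ℕ} (hn : 0 < n)
    (h σ : Matrix (Fin n) (Fin n) ℂ)
    (hh : h.PosDef) (hσ : σ.PosDef)
    (R : Fin n → Fin n → Fin n → Fin n → ℂ)
    (hsym1 : ∀ i j k l, R i j k l = R k j i l)
    (hsym2 : ∀ i j k l, R i j k l = R i l k j)
    (hherm : ∀ i j k l, R i j k l = starRingEnd ℂ (R j i l k))
    (κ : ℝ) (hκ : 0 < κ)
    (hHSC : ∀ v : Fin n → ℂ,
      (∑ i, ∑ j, ∑ k, ∑ l,
          R i j k l * v i * starRingEnd ℂ (v j) * v k * starRingEnd ℂ (v l)).re ≤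
        -κ * ((∑ i, ∑ j, h i j * v i * starRingEnd ℂ (v j)).re) ^ 2) :
    (∑ i, ∑ j, ∑ k, ∑ l, σ⁻¹ j i * σ⁻¹ l k * R i j k l).re ≤
      -((n + 1 : ℝ) / (2 * n)) * κ *
        ((∑ i, ∑ j, σ⁻¹ j i * h i j).re) ^ 2 := by
  classical
  obtain ⟨E, hE, hEdiag⟩ := exists_E h σ hh.1 hσ
  have hEntry : ∀ i j : Fin n, σ⁻¹ j i = ∑ a, conj' (E a j) * E a i := by
    intro i j
    rw [hE, Matrix.mul_apply]
    refine Finset.sum_congr rfl fun a _ => ?_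
    rw [Matrix.star_apply]
    rfl
  set B : Fin n → Fin n → ℂ := fun a b => ∑ i, ∑ j, h i j * E a i * conj' (E b j) with hBdef
  have hBoff : ∀ a b, a ≠ b → B a b = 0 := by
    intro a b hab
    have hd := hEdiag a b hab
    rw [← hd, Matrix.mul_apply]
    rw [hBdef]
    simp only [Matrix.mul_apply, Matrix.star_apply, Matrix.star_eq_conjTranspose,
      Matrix.conjTranspose_apply, Finset.sum_mul]
    rw [Finset.sum_comm]
    refine Finset.sum_congr rfl fun i _ => Finset.sum_congr rfl fun j _ => by
      simp only [Complex.star_def]; ring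
  set t : Fin n → ℝ := fun a => (B a a).re with htdef
  set T : ℝ := ∑ a, t a with hTdef
  have hTc : (∑ i, ∑ j, σ⁻¹ j i * h i j) = ∑ a, B a a := by
    calc (∑ i, ∑ j, σ⁻¹ j i * h i j)
        = ∑ i, ∑ j, ∑ a, conj' (E a j) * E a i * h i j := by
          refine Finset.sum_congr rfl fun i _ => Finset.sum_congr rfl fun j _ => ?_
          rw [hEntry i j, Finset.sum_mul]
      _ = ∑ a, ∑ i, ∑ j, conj' (E a j) * E a i * h i j := by
          rw [← sc2 (fun a i j => conj' (E a j) * E a i * h i j)]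
      _ = ∑ a, B a a := by
          refine Finset.sum_congr rfl fun a _ => ?_
          rw [hBdef]
          refine Finset.sum_congr rfl fun i _ => Finset.sum_congr rfl fun j _ => by ring
  have hT : (∑ i, ∑ j, σ⁻¹ j i * h i j).re = T := by
    rw [hTc, Complex.re_sum, hTdef]
  have hS : (∑ i, ∑ j, ∑ k, ∑ l, σ⁻¹ j i * σ⁻¹ l k * R i j k l)
      = ∑ a, ∑ g, F4 R E a a g g := by
    calc (∑ i, ∑ j, ∑ k, ∑ l, σ⁻¹ j i * σ⁻¹ l k * R i j k l)
        = ∑ i, ∑ j, ∑ k, ∑ l, ∑ a, ∑ g,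
            (conj' (E a j) * E a i) * (conj' (E g l) * E g k) * R i j k l := by
          refine Finset.sum_congr rfl fun i _ => Finset.sum_congr rfl fun j _ =>
            Finset.sum_congr rfl fun k _ => Finset.sum_congr rfl fun l _ => ?_
          rw [hEntry i j, hEntry k l, Finset.sum_mul_sum]
          simp only [Finset.sum_mul]
      _ = ∑ a, ∑ g, ∑ i, ∑ j, ∑ k, ∑ l,
            (conj' (E a j) * E a i) * (conj' (E g l) * E g k) * R i j k l :=
          sum6_comm _
      _ = ∑ a, ∑ g, F4 R E a a g g := by
          refine Finset.sum_congr rfl fun a _ => Finset.sum_congr rfl fun g _ => ?_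
          unfold F4
          refine Finset.sum_congr rfl fun i _ => Finset.sum_congr rfl fun j _ =>
            Finset.sum_congr rfl fun k _ => Finset.sum_congr rfl fun l _ => by ring
  have hQa : ∀ a, (F4 R E a a a a).re ≤ -κ * (t a) ^ 2 := by
    intro a
    have := hHSC (fun i => E a i)
    simpa [F4, htdef, hBdef] using this
  set vv : (Fin n → Fin 4) → Fin n → ℂ := fun ε i => ∑ a, phase (ε a) * E a i with hvv
  have hH : ∀ ε, (∑ i, ∑ j, h i j * vv ε i * conj' (vv ε j)).re = T := by
    intro ε
    have e2 := expand_quadratic h E (fun a => phase (ε a))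
    have hdiag2 : ∀ a, (∑ b, phase (ε a) * conj' (phase (ε b)) *
        (∑ i, ∑ j, h i j * E a i * conj' (E b j))) = B a a := by
      intro a
      rw [Finset.sum_eq_single a]
      · rw [show (∑ i, ∑ j, h i j * E a i * conj' (E a j)) = B a a from rfl, phase_mul_conj,
          one_mul]
      · intro b _ hb
        rw [show (∑ i, ∑ j, h i j * E a i * conj' (E b j)) = B a b from rfl,
          hBoff a b (fun hab => hb hab.symm), mul_zero]
      · intro hmem
        exact absurd (Finset.mem_univ a) hmem
    calc (∑ i, ∑ j, h i j * vv ε i * conj' (vv ε j)).re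
        = (∑ a, B a a).re := by rw [hvv]; rw [e2]; rw [Finset.sum_congr rfl
            fun a _ => hdiag2 a]
      _ = T := by rw [Complex.re_sum, hTdef]
  have havg : (∑ ε : Fin n → Fin 4, (∑ i, ∑ j, ∑ k, ∑ l,
      R i j k l * vv ε i * conj' (vv ε j) * vv ε k * conj' (vv ε l)))
      = (4 : ℂ) ^ n * (2 * (∑ a, ∑ g, F4 R E a a g g) - ∑ a, F4 R E a a a a) := by
    calc (∑ ε : Fin n → Fin 4, (∑ i, ∑ j, ∑ k, ∑ l,
        R i j k l * vv ε i * conj' (vv ε j) * vv ε k * conj' (vv ε l)))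
        = ∑ ε : Fin n → Fin 4, ∑ a, ∑ b, ∑ g, ∑ d,
            phase (ε a) * conj' (phase (ε b)) * phase (ε g) * conj' (phase (ε d))
              * F4 R E a b g d := by
          refine Finset.sum_congr rfl fun ε _ => ?_
          rw [hvv]
          exact expand_quartic R E (fun t => phase (ε t))
      _ = ∑ a, ∑ b, ∑ g, ∑ d, ∑ ε : Fin n → Fin 4,
            phase (ε a) * conj' (phase (ε b)) * phase (ε g) * conj' (phase (ε d))
              * F4 R E a b g d :=
          sc4 _
      _ = ∑ a, ∑ b, ∑ g, ∑ d, (if (a = b ∧ g = d) ∨ (a = d ∧ b = g) then (4:ℂ)^n else 0)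
            * F4 R E a b g d := by
          refine Finset.sum_congr rfl fun a _ => Finset.sum_congr rfl fun b _ =>
            Finset.sum_congr rfl fun g _ => Finset.sum_congr rfl fun d _ => ?_
          rw [← Finset.sum_mul, weight]
      _ = (4:ℂ)^n * (∑ a, ∑ g, F4 R E a a g g) + (4:ℂ)^n * (∑ a, ∑ b, F4 R E a b b a)
            - (4:ℂ)^n * (∑ a, F4 R E a a a a) :=
          ite_sum_split ((4:ℂ)^n) (F4 R E)
      _ = (4 : ℂ) ^ n * (2 * (∑ a, ∑ g, F4 R E a a g g) - ∑ a, F4 R E a a a a) := by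
          rw [Finset.sum_congr rfl fun a (_ : a ∈ Finset.univ) => Finset.sum_congr rfl
            fun b (_ : b ∈ Finset.univ) => F4_swap R hsym1 E a b]
          rw [Finset.sum_comm]
          ring
  set Sc : ℂ := ∑ a, ∑ g, F4 R E a a g g with hScdef
  have hcard : (Finset.univ : Finset (Fin n → Fin 4)).card = 4 ^ n := by
    simp [Fintype.card_fun]
  have key1 : (4:ℝ)^n * (2 * Sc.re - ∑ a, (F4 R E a a a a).re) ≤ (4:ℝ)^n * (-κ * T^2) := by
    have lhs_eq : (∑ ε : Fin n → Fin 4, (∑ i, ∑ j, ∑ k, ∑ l,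
        R i j k l * vv ε i * conj' (vv ε j) * vv ε k * conj' (vv ε l)).re)
        = (4:ℝ)^n * (2 * Sc.re - ∑ a, (F4 R E a a a a).re) := by
      rw [← Complex.re_sum, havg]
      rw [show ((4:ℂ)^n) = (((4:ℝ)^n : ℝ) : ℂ) by push_cast; ring]
      rw [Complex.re_ofReal_mul]
      congr 1
      rw [Complex.sub_re, Complex.re_sum]
      congr 1
      simp [Complex.mul_re]
    rw [← lhs_eq]
    calc (∑ ε : Fin n → Fin 4, (∑ i, ∑ j, ∑ k, ∑ l,
        R i j k l * vv ε i * conj' (vv ε j) * vv ε k * conj' (vv ε l)).re)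
        ≤ ∑ _ε : Fin n → Fin 4, (-κ * T^2) := by
          refine Finset.sum_le_sum fun ε _ => ?_
          have hb := hHSC (vv ε)
          rw [hH ε] at hb
          exact hb
      _ = (4:ℝ)^n * (-κ * T^2) := by
          rw [Finset.sum_const, hcard, nsmul_eq_mul]
          push_cast
          ring
  have key2 : 2 * Sc.re - ∑ a, (F4 R E a a a a).re ≤ -κ * T^2 :=
    (mul_le_mul_iff_right₀ (by positivity : (0:ℝ) < (4:ℝ)^n)).mp key1
  have key3 : ∑ a, (F4 R E a a a a).re ≤ -κ * ∑ a, (t a)^2 := by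
    calc ∑ a, (F4 R E a a a a).re ≤ ∑ a, (-κ * (t a)^2) :=
          Finset.sum_le_sum fun a _ => hQa a
      _ = -κ * ∑ a, (t a)^2 := by rw [Finset.mul_sum]
  have hCS : T^2 ≤ (n:ℝ) * ∑ a, (t a)^2 := by
    have hcs := sq_sum_le_card_mul_sum_sq (s := (Finset.univ : Finset (Fin n))) (f := t)
    simpa [hTdef] using hcs
  have hq2 : (0:ℝ) ≤ ∑ a, (t a)^2 := Finset.sum_nonneg fun a _ => sq_nonneg _
  have hnn : (0:ℝ) < (n:ℝ) := by exact_mod_cast hn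
  rw [hS, hT]
  have hgoal : -((n + 1 : ℝ) / (2 * n)) * κ * T ^ 2 = (-((n+1) * κ * T^2)) / (2 * n) := by
    field_simp
  rw [hgoal, le_div_iff₀ (by positivity : (0:ℝ) < 2 * (n:ℝ))]
  have c1 : 2 * Sc.re ≤ -κ * T^2 - κ * ∑ a, (t a)^2 := by linarith [key2, key3]
  have c2 : (n:ℝ) * (2 * Sc.re) ≤ (n:ℝ) * (-κ * T^2 - κ * ∑ a, (t a)^2) :=
    mul_le_mul_of_nonneg_left c1 hnn.le
  have c3 : κ * T^2 ≤ κ * ((n:ℝ) * ∑ a, (t a)^2) := mul_le_mul_of_nonneg_left hCS hκ.le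
  nlinarith [c2, c3]
end Main
end
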